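/- Let Z be a separable Banach space and let Lip(Z) be the space of 1-Lipschitz functions Z → ℝ with the topology of pointwise convergence, on which Z acts by (ζ·f)(z) = f(ζ + z). For each ζ ∈ Z with ζ ≠ 0, the set X_ζ = {f ∈ Lip(Z) : ∃ z ∈ Z, |f(ζ+z) − f(z)| > ‖ζ‖/2} is open and dense in Lip(Z). -/

import Mathlib

lemma lip_one_cone {Z : Type*} [NormedAddCommGroup Z] (p : Z) (c : ℝ) :
    LipschitzWith 1 (fun w : Z => c + ‖w - p‖) := by
  apply LipschitzWith.of_dist_le_mul
  intro x y
  simp only [Real.dist_eq, add_sub_add_left_eq_sub, one_mul, dist_eq_norm, NNReal.coe_one]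
  calc |‖x - p‖ - ‖y - p‖| ≤ ‖(x - p) - (y - p)‖ := abs_norm_sub_norm_le _ _
    _ = ‖x - y‖ := by abel_nf

lemma lip_inf' {Z : Type*} [NormedAddCommGroup Z] (I : Finset Z) (h : I.Nonempty)
    (v : Z → ℝ) : LipschitzWith 1 (fun w => I.inf' h fun p => v p + ‖w - p‖) := by
  induction h using Finset.Nonempty.cons_induction with
  | singleton a => simpa using lip_one_cone a (v a)
  | cons a s ha hs ih =>
      have he : (fun w => (Finset.cons a s ha).inf' (Finset.cons_nonempty ha)
            fun p => v p + ‖w - p‖)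
          = fun w => min (v a + ‖w - a‖) (s.inf' hs fun p => v p + ‖w - p‖) := by
        funext w; exact Finset.inf'_cons (H := hs) _
      rw [he]
      simpa using (lip_one_cone a (v a)).min ih

theorem stmt6 {Z : Type*} [NormedAddCommGroup Z] [NormedSpace ℝ Z] [CompleteSpace Z]
    [TopologicalSpace.SeparableSpace Z] (ζ : Z) (hζ : ζ ≠ 0) :
    IsOpen {f : {f : Z → ℝ // LipschitzWith 1 f} |
        ∃ z : Z, |f.1 (ζ + z) - f.1 z| > ‖ζ‖ / 2} ∧
    Dense {f : {f : Z → ℝ // LipschitzWith 1 f} |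
        ∃ z : Z, |f.1 (ζ + z) - f.1 z| > ‖ζ‖ / 2} := by
  classical
  have hc0 : (0:ℝ) < ‖ζ‖ := norm_pos_iff.mpr hζ
  constructor
  · -- openness
    have hrw : {f : {f : Z → ℝ // LipschitzWith 1 f} |
        ∃ z : Z, |f.1 (ζ + z) - f.1 z| > ‖ζ‖ / 2}
        = ⋃ z : Z, {f : {f : Z → ℝ // LipschitzWith 1 f} |
            ‖ζ‖ / 2 < |f.1 (ζ + z) - f.1 z|} := by
      ext f; simp [Set.mem_iUnion, gt_iff_lt]
    rw [hrw]
    refine isOpen_iUnion fun z => ?_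
    have hcont : Continuous fun f : {f : Z → ℝ // LipschitzWith 1 f} =>
        |f.1 (ζ + z) - f.1 z| :=
      (((continuous_apply (ζ + z)).comp continuous_subtype_val).sub
        ((continuous_apply z).comp continuous_subtype_val)).abs
    exact isOpen_lt continuous_const hcont
  · -- density
    rw [dense_iff_inter_open]
    rintro W hW ⟨f, hfW⟩
    obtain ⟨V, hV, rfl⟩ := isOpen_induced_iff.mp hW
    obtain ⟨I, u, hu, hpi⟩ := isOpen_pi_iff.mp hV f.1 hfW
    -- bound on the norms of points of I
    obtain ⟨M0, hM0⟩ := (I.image fun z : Z => ‖z‖).exists_le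
    set M : ℝ := max M0 0 with hMdef
    have hMnn : (0:ℝ) ≤ M := le_max_right _ _
    have hnorm : ∀ i ∈ I, ‖i‖ ≤ M := fun i hi =>
      le_trans (hM0 _ (Finset.mem_image_of_mem _ hi)) (le_max_left _ _)
    set r : ℝ := 2 * M + 1 with hrdef
    have hr0 : 0 < r := by positivity
    set z₀ : Z := (r / ‖ζ‖) • ζ with hz₀def
    have hz₀ : ‖z₀‖ = r := by
      rw [hz₀def, norm_smul, Real.norm_eq_abs, abs_of_pos (by positivity),
        div_mul_cancel₀ _ (ne_of_gt hc0)]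
    have hz₁ : ‖ζ + z₀‖ = ‖ζ‖ + r := by
      have : ζ + z₀ = ((1 + r / ‖ζ‖)) • ζ := by
        rw [hz₀def, add_smul, one_smul]
      rw [this, norm_smul, Real.norm_eq_abs, abs_of_pos (by positivity), add_mul, one_mul,
        div_mul_cancel₀ _ (ne_of_gt hc0)]
    -- distances
    have hd_ub : ∀ i ∈ I, ‖z₀ - i‖ ≤ r + M := fun i hi => by
      calc ‖z₀ - i‖ ≤ ‖z₀‖ + ‖i‖ := norm_sub_le _ _
        _ ≤ r + M := by rw [hz₀]; exact add_le_add_right (hnorm i hi) r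
    have hd'_lb : ∀ i ∈ I, ‖ζ‖ + r - M ≤ ‖(ζ + z₀) - i‖ := fun i hi => by
      have := norm_sub_norm_le (ζ + z₀) i
      rw [hz₁] at this
      linarith [hnorm i hi]
    have hd_le_d' : ∀ i : Z, ‖z₀ - i‖ ≤ ‖(ζ + z₀) - i‖ + ‖ζ‖ := fun i => by
      calc ‖z₀ - i‖ = ‖((ζ + z₀) - i) - ζ‖ := by abel_nf
        _ ≤ ‖(ζ + z₀) - i‖ + ‖ζ‖ := norm_sub_le _ _
    -- Lipschitz estimate for f
    have hfl : ∀ x y : Z, |f.1 x - f.1 y| ≤ ‖x - y‖ := fun x y => by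
      have := f.2.dist_le_mul x y
      rwa [Real.dist_eq, dist_eq_norm, NNReal.coe_one, one_mul] at this
    set a : ℝ := f.1 z₀ with hadef
    -- key gap fact
    have hgap : ∀ i ∈ I, ∀ j ∈ I,
        f.1 i - ‖(ζ + z₀) - i‖ + 2 * ‖ζ‖ ≤ f.1 j + ‖(ζ + z₀) - j‖ := by
      intro i hi j hj
      have h1 : f.1 i - f.1 j ≤ ‖i - j‖ := (abs_le.mp (hfl i j)).2
      have h2 : ‖i - j‖ ≤ ‖i‖ + ‖j‖ := norm_sub_le _ _
      have := hd'_lb i hi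
      have := hd'_lb j hj
      have := hnorm i hi
      have := hnorm j hj
      have : r = 2 * M + 1 := hrdef
      linarith
    -- choice of b
    have hb : ∃ b : ℝ, 3 / 4 * ‖ζ‖ ≤ |b - a| ∧ |b - a| ≤ ‖ζ‖ ∧
        ∀ i ∈ I, |b - f.1 i| ≤ ‖(ζ + z₀) - i‖ := by
      rcases Finset.eq_empty_or_nonempty I with hI | hI
      · exact ⟨a + ‖ζ‖, by rw [add_sub_cancel_left, abs_of_pos hc0]; linarith,
          by rw [add_sub_cancel_left, abs_of_pos hc0], by simp [hI]⟩
      · set U : ℝ := I.inf' hI (fun i => f.1 i + ‖(ζ + z₀) - i‖) with hUdef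
        have hLU : ∀ i ∈ I, f.1 i - ‖(ζ + z₀) - i‖ + 2 * ‖ζ‖ ≤ U := fun i hi =>
          Finset.le_inf' hI _ (fun j hj => hgap i hi j hj)
        by_cases hcase : a + 3 / 4 * ‖ζ‖ ≤ U
        · refine ⟨min (a + ‖ζ‖) U, ?_, ?_, ?_⟩
          · have h1 : a + 3 / 4 * ‖ζ‖ ≤ min (a + ‖ζ‖) U :=
              le_min (by linarith) hcase
            rw [abs_of_nonneg (by linarith)]
            linarith
          · rw [abs_of_nonneg (by
              have : a + 3 / 4 * ‖ζ‖ ≤ min (a + ‖ζ‖) U := le_min (by linarith) hcase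
              linarith)]
            have : min (a + ‖ζ‖) U ≤ a + ‖ζ‖ := min_le_left _ _
            linarith
          · intro i hi
            rw [abs_le]
            constructor
            · -- lower bound
              have h1 : f.1 i - ‖(ζ + z₀) - i‖ ≤ U := by
                have := hLU i hi; linarith
              have h2 : f.1 i - ‖z₀ - i‖ ≤ a := by
                have h := (abs_le.mp (hfl i z₀)).2
                rw [norm_sub_rev i z₀] at h
                rw [hadef]; linarith
              have h3 : f.1 i - ‖(ζ + z₀) - i‖ ≤ a + ‖ζ‖ := by
                have := hd_le_d' i
                linarith
              have := le_min h3 h1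
              linarith
            · have : min (a + ‖ζ‖) U ≤ U := min_le_right _ _
              have h1 : U ≤ f.1 i + ‖(ζ + z₀) - i‖ := Finset.inf'_le _ hi
              linarith
        · push_neg at hcase
          refine ⟨a - ‖ζ‖, ?_, ?_, ?_⟩
          · rw [abs_sub_comm, show a - (a - ‖ζ‖) = ‖ζ‖ by ring, abs_of_pos hc0]
            linarith
          · rw [abs_sub_comm, show a - (a - ‖ζ‖) = ‖ζ‖ by ring, abs_of_pos hc0]
          · intro i hi
            rw [abs_le]
            constructor
            · -- f i - d'ᵢ ≤ U - 2‖ζ‖ < a + 3/4‖ζ‖ - 2‖ζ‖ < a - ‖ζ‖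
              have h1 := hLU i hi
              linarith
            · have h2 : a ≤ f.1 i + ‖z₀ - i‖ := by
                have := (abs_le.mp (hfl z₀ i)).2
                rw [hadef]; linarith
              have := hd_le_d' i
              linarith
    obtain ⟨b, hb1, hb2, hb3⟩ := hb
    -- the three special points are distinct from I
    have hz₀I : z₀ ∉ I := fun h => by
      have := hnorm _ h; rw [hz₀] at this; rw [hrdef] at this; linarith
    have hz₁I : ζ + z₀ ∉ I := fun h => by
      have := hnorm _ h; rw [hz₁] at this; rw [hrdef] at this; linarith
    have hz₀₁ : z₀ ≠ ζ + z₀ := fun h => by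
      apply hζ
      have : ζ + z₀ - z₀ = 0 := by rw [← h]; abel
      simpa using this
    -- the finite conf and v
    set I' : Finset Z := insert z₀ (insert (ζ + z₀) I) with hI'def
    have hI'ne : I'.Nonempty := ⟨z₀, Finset.mem_insert_self _ _⟩
    set v : Z → ℝ := fun p => if p = z₀ then a else if p = ζ + z₀ then b else f.1 p with hvdef
    have hv₀ : v z₀ = a := by simp [hvdef]
    have hv₁ : v (ζ + z₀) = b := by simp [hvdef, (Ne.symm hz₀₁)]
    have hvI : ∀ i ∈ I, v i = f.1 i := by
      intro i hi
      have h1 : i ≠ z₀ := fun h => hz₀I (h ▸ hi)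
      have h2 : i ≠ ζ + z₀ := fun h => hz₁I (h ▸ hi)
      simp [hvdef, h1, h2]
    -- compatibility
    have hcompat : ∀ p ∈ I', ∀ q ∈ I', v p ≤ v q + ‖p - q‖ := by
      have hnz : ‖z₀ - (ζ + z₀)‖ = ‖ζ‖ := by
        rw [show z₀ - (ζ + z₀) = -ζ by abel, norm_neg]
      have hnz' : ‖(ζ + z₀) - z₀‖ = ‖ζ‖ := by
        rw [show (ζ + z₀) - z₀ = ζ by abel]
      intro p hp q hq
      rw [hI'def] at hp hq
      simp only [Finset.mem_insert] at hp hq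
      rcases hp with rfl | rfl | hp <;> rcases hq with rfl | rfl | hq
      · simp
      · rw [hv₀, hv₁, hnz]
        have := (abs_le.mp hb2).1; linarith
      · rw [hv₀, hvI _ hq]
        have := (abs_le.mp (hfl z₀ q)).2; rw [hadef]; linarith
      · rw [hv₀, hv₁, hnz']
        have := (abs_le.mp hb2).2; linarith
      · simp
      · rw [hv₁, hvI _ hq]
        have := (abs_le.mp (hb3 q hq)).2; linarith
      · rw [hv₀, hvI _ hp]
        have := (abs_le.mp (hfl p z₀)).2; rw [hadef]; linarith
      · rw [hv₁, hvI _ hp]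
        have h := (abs_le.mp (hb3 p hp)).1
        rw [norm_sub_rev]
        linarith
      · rcases eq_or_ne p q with rfl | hpq
        · simp
        · rw [hvI _ hp, hvI _ hq]
          have := (abs_le.mp (hfl p q)).2; linarith
    -- the extension
    set g : Z → ℝ := fun w => I'.inf' hI'ne (fun p => v p + ‖w - p‖) with hgdef
    have hglip : LipschitzWith 1 g := lip_inf' I' hI'ne v
    have hg_eq : ∀ p ∈ I', g p = v p := by
      intro p hp
      apply le_antisymm
      · have h := Finset.inf'_le (fun q => v q + ‖p - q‖) hp
        rw [sub_self, norm_zero, add_zero] at h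
        exact h
      · apply Finset.le_inf'
        intro q hq
        exact hcompat p hp q hq
    have hz₀I' : z₀ ∈ I' := Finset.mem_insert_self _ _
    have hz₁I' : ζ + z₀ ∈ I' := Finset.mem_insert_of_mem (Finset.mem_insert_self _ _)
    refine ⟨⟨g, hglip⟩, ?_, ?_⟩
    · -- in the open set W
      show g ∈ V
      apply hpi
      intro i hi
      have hiI : i ∈ I := hi
      have : g i = f.1 i := by
        rw [hg_eq i (Finset.mem_insert_of_mem (Finset.mem_insert_of_mem hiI)), hvI i hiI]
      rw [this]
      exact (hu i hiI).2
    · -- in the dense set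
      refine ⟨z₀, ?_⟩
      show ‖ζ‖ / 2 < |g (ζ + z₀) - g z₀|
      rw [hg_eq _ hz₁I', hg_eq _ hz₀I', hv₀, hv₁]
      calc ‖ζ‖ / 2 < 3 / 4 * ‖ζ‖ := by linarith
        _ ≤ |b - a| := hb1
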